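/- Let X be a proper, locally connected metric measure space, 1 ≤ p < ∞, and let Ω ⊆ X be a bounded domain which is finitely connected at the boundary. Then for every E ⊆ clΩ, bCp(Φ⁻¹(E);Ω_M) = bCp(E;Ω). -/

import Mathlib

open Set MeasureTheory Filter ENNReal NNReal Metric Topology

noncomputable section

/-- Extended absolute value of the "difference" of two extended reals; with Mathlib's
`EReal` subtraction conventions, `erealAbs (a - b) = ∞` whenever both `a` and `b`
are infinite, matching the convention for the upper gradient inequality. -/
def erealAbs (a : EReal) : ℝ≥0∞ :=
  if a = ⊤ ∨ a = ⊥ then ⊤ else ENNReal.ofReal |a.toReal|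

/-- Variation of `γ` over `[a,b]` computed with respect to an arbitrary
distance-like function `ρ`, as a supremum over partitions
`a = t 0 ≤ t 1 ≤ ⋯ ≤ t n = b`. -/
def variationWith {Y : Type*} (ρ : Y → Y → ℝ≥0∞) (γ : ℝ → Y) (a b : ℝ) : ℝ≥0∞ :=
  ⨆ P ∈ {P : ℕ × (ℕ → ℝ) |
      Monotone P.2 ∧ (∀ i, P.2 i ∈ Set.Icc a b) ∧ P.2 0 = a ∧ P.2 P.1 = b},
    ∑ i ∈ Finset.range P.1, ρ (γ (P.2 i)) (γ (P.2 (i + 1)))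

/-- `γ : [0,L] → Y` is parameterized by arc length with respect to `ρ`. -/
def IsArcLengthParamWith {Y : Type*} (ρ : Y → Y → ℝ≥0∞) (γ : ℝ → Y) (L : ℝ) : Prop :=
  ∀ s t : ℝ, s ∈ Set.Icc 0 L → t ∈ Set.Icc 0 L → s ≤ t →
    variationWith ρ γ s t = ENNReal.ofReal (t - s)

/-- `g` is an upper gradient of `f` on `S` with respect to the distance `ρ`:
for every (nonconstant, compact, rectifiable) curve in `S` parameterized by
arc length, the upper gradient inequality holds. -/
def IsUpperGradientWith {Y : Type*} (ρ : Y → Y → ℝ≥0∞) (S : Set Y)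
    (g : Y → ℝ≥0∞) (f : Y → EReal) : Prop :=
  ∀ (γ : ℝ → Y) (L : ℝ), 0 < L → Set.MapsTo γ (Set.Icc 0 L) S →
    IsArcLengthParamWith ρ γ L →
    erealAbs (f (γ L) - f (γ 0)) ≤ ∫⁻ t in Set.Icc 0 L, g (γ t)

/-- Upper gradient on `S` with respect to the ambient metric. -/
def IsUpperGradientOn {Y : Type*} [PseudoEMetricSpace Y] (S : Set Y)
    (g : Y → ℝ≥0∞) (f : Y → EReal) : Prop :=
  IsUpperGradientWith (fun x y => edist x y) S g f

/-- The `p`-th power of the Newtonian norm of `f` on `S` with respect to the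
measure `m` and the distance `ρ`:
`∫_S |f|^p dm + inf {∫_S g^p dm : g a Borel upper gradient of f on S w.r.t. ρ}`. -/
def npEnergyWith {Y : Type*} [MeasurableSpace Y] (m : Measure Y) (p : ℝ)
    (ρ : Y → Y → ℝ≥0∞) (S : Set Y) (f : Y → ℝ) : ℝ≥0∞ :=
  (∫⁻ y in S, ENNReal.ofReal |f y| ^ p ∂m) +
    ⨅ g ∈ {g : Y → ℝ≥0∞ | Measurable g ∧
        IsUpperGradientWith ρ S g (fun y => (f y : EReal))},
      ∫⁻ y in S, g y ^ p ∂m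

/-- The `p`-th power of the Newtonian norm of `f` on `S ⊆ Y` (w.r.t. the ambient metric). -/
def npEnergyOn {Y : Type*} [PseudoEMetricSpace Y] [MeasurableSpace Y]
    (m : Measure Y) (p : ℝ) (S : Set Y) (f : Y → ℝ) : ℝ≥0∞ :=
  npEnergyWith m p (fun x y => edist x y) S f

/-- `f ∈ N^{1,p}(S, m)`. -/
def MemNp {Y : Type*} [PseudoEMetricSpace Y] [MeasurableSpace Y]
    (m : Measure Y) (p : ℝ) (S : Set Y) (f : Y → ℝ) : Prop :=
  Measurable f ∧ npEnergyOn m p S f ≠ ⊤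

/-- The Sobolev capacity `C_p(E; S)` of `E ⊆ S`. -/
def CpOn {Y : Type*} [PseudoEMetricSpace Y] [MeasurableSpace Y]
    (m : Measure Y) (p : ℝ) (S E : Set Y) : ℝ≥0∞ :=
  ⨅ u ∈ {u : Y → ℝ | MemNp m p S u ∧ ∀ x ∈ E, u x = 1}, npEnergyOn m p S u

/-- The capacity `bC_p(E; S)` of `E ⊆ closure S`. -/
def bCpOn {Y : Type*} [PseudoEMetricSpace Y] [MeasurableSpace Y]
    (m : Measure Y) (p : ℝ) (S E : Set Y) : ℝ≥0∞ :=
  ⨅ u ∈ {u : Y → ℝ | MemNp m p S u ∧ (∀ x ∈ E ∩ S, 1 ≤ u x) ∧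
      ∀ x ∈ E ∩ (closure S \ S),
        (1 : EReal) ≤ Filter.liminf (fun y => (u y : EReal)) (nhdsWithin x S)},
    npEnergyOn m p S u

/-- The Mazurkiewicz distance on `S`. -/
def mazDist {Y : Type*} [PseudoEMetricSpace Y] (S : Set Y) (x y : Y) : ℝ≥0∞ :=
  ⨅ E ∈ {E : Set Y | E ⊆ S ∧ IsConnected E ∧ x ∈ E ∧ y ∈ E}, EMetric.diam E

/-- The inner metric on `S`: the infimum of lengths of curves in `S` joining
`x` and `y` (`∞` if there are none). -/
def innerDist {Y : Type*} [PseudoEMetricSpace Y] (S : Set Y) (x y : Y) : ℝ≥0∞ :=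
  ⨅ c ∈ {c : (ℝ → Y) × ℝ × ℝ | c.2.1 ≤ c.2.2 ∧
      ContinuousOn c.1 (Set.Icc c.2.1 c.2.2) ∧
      Set.MapsTo c.1 (Set.Icc c.2.1 c.2.2) S ∧ c.1 c.2.1 = x ∧ c.1 c.2.2 = y},
    eVariationOn c.1 (Set.Icc c.2.1 c.2.2)

/-- `S` is `L`-quasiconvex: any two points of `S` can be joined by a curve in `S`
of length at most `L` times their distance. -/
def LQuasiconvexOn {Y : Type*} [PseudoMetricSpace Y] (S : Set Y) (L : ℝ) : Prop :=
  ∀ x ∈ S, ∀ y ∈ S, ∃ (γ : ℝ → Y) (a b : ℝ), a ≤ b ∧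
    ContinuousOn γ (Set.Icc a b) ∧ Set.MapsTo γ (Set.Icc a b) S ∧
    γ a = x ∧ γ b = y ∧ eVariationOn γ (Set.Icc a b) ≤ ENNReal.ofReal (L * dist x y)

/-- A quasiconvex metric space. -/
def QuasiconvexSpace (Y : Type*) [PseudoMetricSpace Y] : Prop :=
  ∃ L : ℝ, 1 ≤ L ∧ LQuasiconvexOn (Set.univ : Set Y) L

/-- A bounded domain: a bounded nonempty open connected set. -/
def IsBoundedDomain {Y : Type*} [PseudoMetricSpace Y] (Ω : Set Y) : Prop :=
  IsOpen Ω ∧ IsConnected Ω ∧ Bornology.IsBounded Ω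

/-- `Ω` is finitely connected at the boundary. -/
def FinConnAtBoundary {Y : Type*} [MetricSpace Y] (Ω : Set Y) : Prop :=
  ∀ x₀ ∈ frontier Ω, ∀ r : ℝ, 0 < r → ∃ G : Set Y, IsOpen G ∧ x₀ ∈ G ∧
    G ⊆ Metric.ball x₀ r ∧
    {C : Set Y | ∃ x ∈ G ∩ Ω, C = connectedComponentIn (G ∩ Ω) x}.Finite

/-- The standing assumption on the measure: every ball has positive finite measure. -/
def BallRegular {Y : Type*} [PseudoMetricSpace Y] [MeasurableSpace Y]
    (m : Measure Y) : Prop :=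
  ∀ (x : Y) (r : ℝ), 0 < r → 0 < m (Metric.ball x r) ∧ m (Metric.ball x r) < ⊤

/-- The measure `m` is (globally) doubling. -/
def DoublingMeasure' {Y : Type*} [PseudoMetricSpace Y] [MeasurableSpace Y]
    (m : Measure Y) : Prop :=
  ∃ C : ℝ≥0, 0 < C ∧ ∀ (x : Y) (r : ℝ), 0 < r →
    m (Metric.ball x (2 * r)) ≤ C * m (Metric.ball x r)

/-- `(Y, m)` supports a `p`-Poincaré inequality. -/
def PoincareInequality {Y : Type*} [MetricSpace Y] [MeasurableSpace Y]
    (m : Measure Y) (p : ℝ) : Prop :=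
  ∃ C lam : ℝ, 0 < C ∧ 1 ≤ lam ∧
    ∀ (x : Y) (r : ℝ), 0 < r → ∀ f : Y → ℝ, Integrable f m →
      ∀ g : Y → ℝ≥0∞, Measurable g →
        IsUpperGradientOn (Set.univ : Set Y) g (fun y => (f y : EReal)) →
        ENNReal.ofReal (⨍ y in Metric.ball x r,
            |f y - ⨍ z in Metric.ball x r, f z ∂m| ∂m) ≤
          ENNReal.ofReal (C * Metric.diam (Metric.ball x r)) *
            ((∫⁻ y in Metric.ball x (lam * r), g y ^ p ∂m) /
              m (Metric.ball x (lam * r))) ^ (1 / p)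

section VariationLemmas

variable {Y : Type*} {W : Type*}

lemma rho_le_variationWith (ρ : Y → Y → ℝ≥0∞) (γ : ℝ → Y) {a b : ℝ} (hab : a ≤ b) :
    ρ (γ a) (γ b) ≤ variationWith ρ γ a b := by
  set v : ℕ → ℝ := fun i => if i = 0 then a else b with hv
  have hmem : ((1, v) : ℕ × (ℕ → ℝ)) ∈ {P : ℕ × (ℕ → ℝ) |
      Monotone P.2 ∧ (∀ i, P.2 i ∈ Set.Icc a b) ∧ P.2 0 = a ∧ P.2 P.1 = b} := by
    refine ⟨?_, fun i => ?_, by simp [hv], by simp [hv]⟩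
    · intro i j hij
      simp only [hv]
      split_ifs with h1 h2
      · exact le_rfl
      · exact hab
      · omega
      · exact le_rfl
    · simp only [hv]; split_ifs
      · exact ⟨le_rfl, hab⟩
      · exact ⟨hab, le_rfl⟩
  refine le_trans ?_ (le_iSup₂ (f := fun (P : ℕ × (ℕ → ℝ)) (_ : P ∈ _) =>
    ∑ i ∈ Finset.range P.1, ρ (γ (P.2 i)) (γ (P.2 (i + 1)))) (1, v) hmem)
  simp [hv]

lemma variationWith_le_variationWith (ρ₁ : Y → Y → ℝ≥0∞) (ρ₂ : W → W → ℝ≥0∞)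
    (γ : ℝ → Y) (δ : ℝ → W) {a b : ℝ}
    (h : ∀ s ∈ Set.Icc a b, ∀ t ∈ Set.Icc a b, ρ₁ (γ s) (γ t) ≤ ρ₂ (δ s) (δ t)) :
    variationWith ρ₁ γ a b ≤ variationWith ρ₂ δ a b := by
  refine iSup₂_le fun P hP => ?_
  refine le_trans (Finset.sum_le_sum fun i _ => h _ (hP.2.1 i) _ (hP.2.1 (i + 1))) ?_
  exact le_iSup₂ (f := fun (P : ℕ × (ℕ → ℝ)) (_ : P ∈ _) =>
    ∑ i ∈ Finset.range P.1, ρ₂ (δ (P.2 i)) (δ (P.2 (i + 1)))) P hP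

lemma variationWith_congr (ρ₁ : Y → Y → ℝ≥0∞) (ρ₂ : W → W → ℝ≥0∞)
    (γ : ℝ → Y) (δ : ℝ → W) {a b : ℝ}
    (h : ∀ s ∈ Set.Icc a b, ∀ t ∈ Set.Icc a b, ρ₁ (γ s) (γ t) = ρ₂ (δ s) (δ t)) :
    variationWith ρ₁ γ a b = variationWith ρ₂ δ a b :=
  le_antisymm (variationWith_le_variationWith _ _ _ _ fun s hs t ht => (h s hs t ht).le)
    (variationWith_le_variationWith _ _ _ _ fun s hs t ht => (h s hs t ht).ge)

lemma variationWith_edist_eq [PseudoEMetricSpace Y] (γ : ℝ → Y) {a b : ℝ} (hab : a ≤ b) :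
    variationWith (fun x y => edist x y) γ a b = eVariationOn γ (Set.Icc a b) := by
  apply le_antisymm
  · refine iSup₂_le fun P hP => ?_
    have := eVariationOn.sum_le (f := γ) (n := P.1) hP.1 hP.2.1
    refine le_trans (le_of_eq ?_) this
    exact Finset.sum_congr rfl fun i _ => edist_comm _ _
  · refine iSup_le fun p => ?_
    obtain ⟨n, u, hu, hus⟩ := p
    set v : ℕ → ℝ := fun i => if i = 0 then a else if i ≤ n + 1 then u (i - 1) else b with hv
    have hva : ∀ i, v i ∈ Set.Icc a b := by
      intro i
      simp only [hv]
      split_ifs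
      · exact ⟨le_rfl, hab⟩
      · exact hus _
      · exact ⟨hab, le_rfl⟩
    have hvmono : Monotone v := by
      apply monotone_nat_of_le_succ
      intro i
      rcases Nat.eq_zero_or_pos i with h0 | h0
      · subst h0
        simp only [hv, if_pos rfl, if_neg (Nat.one_ne_zero), if_pos (by omega : 1 ≤ n + 1)]
        exact (hus 0).1
      · have hi0 : i ≠ 0 := by omega
        have hi10 : i + 1 ≠ 0 := by omega
        by_cases h1 : i + 1 ≤ n + 1
        · have h2 : i ≤ n + 1 := by omega
          simp only [hv, if_neg hi0, if_neg hi10, if_pos h1, if_pos h2]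
          exact hu (by omega)
        · by_cases h2 : i ≤ n + 1
          · simp only [hv, if_neg hi0, if_neg hi10, if_pos h2, if_neg h1]
            have : i - 1 ≤ n := by omega
            exact le_trans (hu this) (hus n).2
          · simp only [hv, if_neg hi0, if_neg hi10, if_neg h1, if_neg h2]
            exact le_rfl
    have hmem : ((n + 2, v) : ℕ × (ℕ → ℝ)) ∈ {P : ℕ × (ℕ → ℝ) |
        Monotone P.2 ∧ (∀ i, P.2 i ∈ Set.Icc a b) ∧ P.2 0 = a ∧ P.2 P.1 = b} := by
      refine ⟨hvmono, hva, by simp [hv], ?_⟩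
      simp only [hv]
      rw [if_neg (by omega : n + 2 ≠ 0), if_neg (by omega : ¬ n + 2 ≤ n + 1)]
    refine le_trans ?_ (le_iSup₂ (f := fun (P : ℕ × (ℕ → ℝ)) (_ : P ∈ _) =>
      ∑ i ∈ Finset.range P.1, edist (γ (P.2 i)) (γ (P.2 (i + 1)))) (n + 2, v) hmem)
    have key : ∀ i ∈ Finset.range n,
        edist (γ (u (i + 1))) (γ (u i)) = edist (γ (v (i + 1))) (γ (v (i + 2))) := by
      intro i hi
      have hi' : i < n := Finset.mem_range.mp hi
      have e1 : v (i + 1) = u i := by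
        simp only [hv, if_neg (by omega : i + 1 ≠ 0), if_pos (by omega : i + 1 ≤ n + 1)]
        congr 1
      have e2 : v (i + 2) = u (i + 1) := by
        simp only [hv, if_neg (by omega : i + 2 ≠ 0), if_pos (by omega : i + 2 ≤ n + 1)]
        congr 1
      rw [e1, e2, edist_comm]
    calc ∑ i ∈ Finset.range n, edist (γ (u (i + 1))) (γ (u i))
        = ∑ i ∈ Finset.range n, edist (γ (v (i + 1))) (γ (v (i + 1 + 1))) := by
          refine Finset.sum_congr rfl fun i hi => ?_
          rw [key i hi]
      _ ≤ edist (γ (v 0)) (γ (v 1)) +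
            ∑ i ∈ Finset.range n, edist (γ (v (i + 1))) (γ (v (i + 1 + 1))) := le_add_self
      _ = ∑ i ∈ Finset.range (n + 1), edist (γ (v i)) (γ (v (i + 1))) := by
          rw [Finset.sum_range_succ']
          exact add_comm _ _
      _ ≤ ∑ i ∈ Finset.range (n + 2), edist (γ (v i)) (γ (v (i + 1))) := by
          rw [Finset.sum_range_succ (n := n + 1)]
          exact le_add_self.trans (le_of_eq (add_comm _ _))
      _ = _ := rfl

lemma sum_eVariationOn_le [PseudoEMetricSpace Y] (γ : ℝ → Y) (v : ℕ → ℝ) (hv : Monotone v) :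
    ∀ n : ℕ, ∑ i ∈ Finset.range n, eVariationOn γ (Set.Icc (v i) (v (i + 1)))
      ≤ eVariationOn γ (Set.Icc (v 0) (v n)) := by
  intro n
  induction n with
  | zero => simp
  | succ n ih =>
    rw [Finset.sum_range_succ]
    have key := eVariationOn.Icc_add_Icc γ (s := (Set.univ : Set ℝ))
      (hv (Nat.zero_le n)) (hv n.le_succ) (Set.mem_univ _)
    simp only [Set.univ_inter] at key
    calc ∑ i ∈ Finset.range n, eVariationOn γ (Set.Icc (v i) (v (i + 1)))
          + eVariationOn γ (Set.Icc (v n) (v (n + 1)))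
        ≤ eVariationOn γ (Set.Icc (v 0) (v n)) + eVariationOn γ (Set.Icc (v n) (v (n + 1))) :=
          add_le_add_left ih _
      _ = _ := key

lemma edist_le_mazDist [PseudoEMetricSpace Y] (S : Set Y) (x y : Y) :
    edist x y ≤ mazDist S x y :=
  le_iInf₂ fun _E hE => EMetric.edist_le_diam_of_mem hE.2.2.1 hE.2.2.2

lemma mazDist_le_diam [PseudoEMetricSpace Y] {S E : Set Y} {x y : Y} (hES : E ⊆ S)
    (hE : IsConnected E) (hx : x ∈ E) (hy : y ∈ E) :
    mazDist S x y ≤ EMetric.diam E :=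
  iInf₂_le E ⟨hES, hE, hx, hy⟩

lemma variationWith_mazDist_le_eVar [PseudoEMetricSpace Y] (S : Set Y) (η : ℝ → Y) {a b : ℝ}
    (hcont : ContinuousOn η (Set.Icc a b)) (hmaps : Set.MapsTo η (Set.Icc a b) S) :
    variationWith (mazDist S) η a b ≤ eVariationOn η (Set.Icc a b) := by
  refine iSup₂_le fun P hP => ?_
  obtain ⟨hmono, hmem, h0, hn⟩ := hP
  have step : ∀ i, mazDist S (η (P.2 i)) (η (P.2 (i + 1)))
      ≤ eVariationOn η (Set.Icc (P.2 i) (P.2 (i + 1))) := by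
    intro i
    have hsub : Set.Icc (P.2 i) (P.2 (i + 1)) ⊆ Set.Icc a b :=
      Set.Icc_subset_Icc (hmem i).1 (hmem (i + 1)).2
    have hle : P.2 i ≤ P.2 (i + 1) := hmono (Nat.le_succ i)
    have himg : IsConnected (η '' Set.Icc (P.2 i) (P.2 (i + 1))) := by
      refine ⟨⟨η (P.2 i), Set.mem_image_of_mem _ (Set.left_mem_Icc.2 hle)⟩, ?_⟩
      exact isPreconnected_Icc.image η (hcont.mono hsub)
    refine le_trans (mazDist_le_diam ?_ himg
      (Set.mem_image_of_mem _ (Set.left_mem_Icc.2 hle))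
      (Set.mem_image_of_mem _ (Set.right_mem_Icc.2 hle))) ?_
    · rintro _ ⟨c, hc, rfl⟩
      exact hmaps (hsub hc)
    · refine EMetric.diam_le ?_
      rintro _ ⟨c, hc, rfl⟩ _ ⟨d, hd, rfl⟩
      exact eVariationOn.edist_le η hc hd
  calc ∑ i ∈ Finset.range P.1, mazDist S (η (P.2 i)) (η (P.2 (i + 1)))
      ≤ ∑ i ∈ Finset.range P.1, eVariationOn η (Set.Icc (P.2 i) (P.2 (i + 1))) :=
        Finset.sum_le_sum fun i _ => step i
    _ ≤ eVariationOn η (Set.Icc (P.2 0) (P.2 P.1)) := sum_eVariationOn_le η P.2 hmono P.1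
    _ = eVariationOn η (Set.Icc a b) := by rw [h0, hn]

/-- For a continuous curve in `S`, the Mazurkiewicz variation agrees with the metric variation. -/
lemma variationWith_mazDist_eq [PseudoEMetricSpace Y] (S : Set Y) (η : ℝ → Y) {a b : ℝ}
    (hab : a ≤ b) (hcont : ContinuousOn η (Set.Icc a b))
    (hmaps : Set.MapsTo η (Set.Icc a b) S) :
    variationWith (mazDist S) η a b = variationWith (fun x y => edist x y) η a b := by
  apply le_antisymm
  · exact (variationWith_mazDist_le_eVar S η hcont hmaps).trans
      (variationWith_edist_eq η hab).ge
  · exact variationWith_le_variationWith _ _ _ _ fun s _ t _ => edist_le_mazDist S _ _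

lemma IsArcLengthParamWith.lipschitzOnWith [PseudoEMetricSpace Y] {γ : ℝ → Y} {L : ℝ}
    (h : IsArcLengthParamWith (fun a b => edist a b) γ L) :
    LipschitzOnWith 1 γ (Set.Icc 0 L) := by
  intro x hx y hy
  wlog hxy : x ≤ y generalizing x y
  · rw [edist_comm (γ x), edist_comm x]
    exact this hy hx (le_of_not_ge hxy)
  calc edist (γ x) (γ y) ≤ variationWith (fun a b => edist a b) γ x y :=
        rho_le_variationWith _ γ hxy
    _ = ENNReal.ofReal (y - x) := h x y hx hy hxy
    _ ≤ 1 * edist x y := by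
        rw [one_mul, edist_dist, Real.dist_eq, abs_of_nonpos (by linarith), neg_sub]
end VariationLemmas
section KeyLemma

/-- Key consequence of finite connectivity at the boundary: any sequence in `Ω`
converging to a boundary point has a subsequence which is Cauchy for the
Mazurkiewicz distance. -/
lemma exists_subseq_mazCauchy {X : Type*} [MetricSpace X] {Ω : Set X}
    (hΩo : IsOpen Ω) (hfc : FinConnAtBoundary Ω) {x : X}
    (hxc : x ∈ closure Ω) (hxn : x ∉ Ω) (y : ℕ → X) (hy : ∀ n, y n ∈ Ω)
    (hconv : Filter.Tendsto y Filter.atTop (nhds x)) :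
    ∃ φ : ℕ → ℕ, StrictMono φ ∧
      ∀ ε : ℝ≥0∞, 0 < ε → ∃ N, ∀ m, N ≤ m → ∀ n, N ≤ n →
        mazDist Ω (y (φ m)) (y (φ n)) < ε := by
  have hxf : x ∈ frontier Ω := by
    rw [frontier, hΩo.interior_eq]
    exact ⟨hxc, hxn⟩
  -- one refinement step
  have step : ∀ S : Set ℕ, S.Infinite → ∀ k : ℕ, ∃ T : Set ℕ, T ⊆ S ∧ T.Infinite ∧
      ∀ m ∈ T, ∀ n ∈ T, mazDist Ω (y m) (y n) ≤ ENNReal.ofReal (2 * (1 / 2) ^ k) := by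
    intro S hS k
    have hrpos : (0 : ℝ) < (1 / 2) ^ k := by positivity
    obtain ⟨G, hGo, hxG, hGb, hGfin⟩ := hfc x hxf ((1 / 2) ^ k) hrpos
    have hev : ∀ᶠ n in Filter.atTop, y n ∈ G := hconv.eventually (hGo.mem_nhds hxG)
    obtain ⟨N, hN⟩ := Filter.eventually_atTop.mp hev
    set S' : Set ℕ := {n ∈ S | y n ∈ G} with hS'
    have hS'inf : S'.Infinite := by
      refine Set.Infinite.mono ?_ (hS.diff (Set.finite_Iio N))
      rintro n ⟨hnS, hnN⟩
      exact ⟨hnS, hN n (by simpa using hnN)⟩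
    -- pigeonhole over the finitely many components
    have hpig : ∃ C ∈ {C : Set X | ∃ z ∈ G ∩ Ω, C = connectedComponentIn (G ∩ Ω) z},
        {n ∈ S' | connectedComponentIn (G ∩ Ω) (y n) = C}.Infinite := by
      by_contra hcon
      push_neg at hcon
      have : S' ⊆ ⋃ C ∈ {C : Set X | ∃ z ∈ G ∩ Ω, C = connectedComponentIn (G ∩ Ω) z},
          {n ∈ S' | connectedComponentIn (G ∩ Ω) (y n) = C} := by
        intro n hn
        exact Set.mem_biUnion ⟨y n, ⟨hn.2, hy n⟩, rfl⟩ ⟨hn, rfl⟩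
      exact hS'inf ((hGfin.biUnion fun C hC => hcon C hC).subset this)
    obtain ⟨C, _hC, hTinf⟩ := hpig
    refine ⟨{n ∈ S' | connectedComponentIn (G ∩ Ω) (y n) = C}, fun n hn => hn.1.1, hTinf, ?_⟩
    intro m hm n hn
    have hym : y m ∈ G ∩ Ω := ⟨hm.1.2, hy m⟩
    have hyn : y n ∈ G ∩ Ω := ⟨hn.1.2, hy n⟩
    have hconn : IsConnected (connectedComponentIn (G ∩ Ω) (y m)) :=
      isConnected_connectedComponentIn_iff.mpr hym
    have hmemn : y n ∈ connectedComponentIn (G ∩ Ω) (y m) := by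
      rw [hm.2, ← hn.2]
      exact mem_connectedComponentIn hyn
    have hsub : connectedComponentIn (G ∩ Ω) (y m) ⊆ Ω :=
      (connectedComponentIn_subset _ _).trans Set.inter_subset_right
    refine le_trans (mazDist_le_diam hsub hconn (mem_connectedComponentIn hym) hmemn) ?_
    have hsubball : connectedComponentIn (G ∩ Ω) (y m) ⊆ Metric.ball x ((1 / 2) ^ k) :=
      ((connectedComponentIn_subset _ _).trans Set.inter_subset_left).trans hGb
    refine le_trans (EMetric.diam_mono hsubball) ?_
    refine EMetric.diam_le fun z hz w hw => ?_
    calc edist z w ≤ edist z x + edist x w := edist_triangle _ _ _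
      _ ≤ ENNReal.ofReal ((1 / 2) ^ k) + ENNReal.ofReal ((1 / 2) ^ k) := by
          gcongr
          · rw [edist_dist]
            exact ENNReal.ofReal_le_ofReal (le_of_lt (Metric.mem_ball.mp hz))
          · rw [edist_comm, edist_dist]
            exact ENNReal.ofReal_le_ofReal (le_of_lt (Metric.mem_ball.mp hw))
      _ = ENNReal.ofReal (2 * (1 / 2) ^ k) := by
          rw [← ENNReal.ofReal_add hrpos.le hrpos.le]; ring_nf
  -- iterate the refinement
  choose F hF1 hF2 hF3 using step
  let Chain : ℕ → {S : Set ℕ // S.Infinite} := fun k =>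
    Nat.rec ⟨Set.univ, Set.infinite_univ⟩ (fun k ih => ⟨F ih.1 ih.2 k, hF2 ih.1 ih.2 k⟩) k
  have hChainSub : ∀ k, (Chain (k + 1)).1 ⊆ (Chain k).1 := fun k => hF1 _ _ _
  have hChainMaz : ∀ k, ∀ m ∈ (Chain (k + 1)).1, ∀ n ∈ (Chain (k + 1)).1,
      mazDist Ω (y m) (y n) ≤ ENNReal.ofReal (2 * (1 / 2) ^ k) := fun k => hF3 _ _ _
  have hanti : ∀ j k, k ≤ j → (Chain j).1 ⊆ (Chain k).1 := by
    intro j k hkj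
    induction j with
    | zero => rw [Nat.le_zero.mp hkj]
    | succ j ih =>
      rcases Nat.eq_or_lt_of_le hkj with h | h
      · rw [h]
      · exact (hChainSub j).trans (ih (by omega))
  -- extract the diagonal subsequence
  let φ : ℕ → ℕ := fun k =>
    Nat.rec ((Chain 0).2.exists_gt 0).choose
      (fun k ih => ((Chain (k + 1)).2.exists_gt ih).choose) k
  have hφmem : ∀ k, φ k ∈ (Chain k).1 := by
    intro k
    cases k with
    | zero => exact ((Chain 0).2.exists_gt 0).choose_spec.1
    | succ k => exact ((Chain (k + 1)).2.exists_gt _).choose_spec.1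
  have hφlt : ∀ k, φ k < φ (k + 1) := fun k =>
    ((Chain (k + 1)).2.exists_gt (φ k)).choose_spec.2
  have hφmono : StrictMono φ := strictMono_nat_of_lt_succ hφlt
  refine ⟨φ, hφmono, ?_⟩
  intro ε hε
  have htend : Filter.Tendsto (fun k : ℕ => ENNReal.ofReal (2 * (1 / 2) ^ k))
      Filter.atTop (nhds 0) := by
    rw [show (0 : ℝ≥0∞) = ENNReal.ofReal (2 * 0) by simp]
    apply ENNReal.tendsto_ofReal
    exact (_root_.tendsto_pow_atTop_nhds_zero_of_lt_one (by norm_num) (by norm_num)).const_mul 2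
  have hev : ∀ᶠ k in Filter.atTop, ENNReal.ofReal (2 * (1 / 2) ^ k) < ε := by
    simpa using htend.eventually_lt_const hε
  obtain ⟨k, hk⟩ := Filter.eventually_atTop.mp hev
  refine ⟨k + 1, fun m hm n hn => ?_⟩
  have h1 : φ m ∈ (Chain (k + 1)).1 := hanti m (k + 1) hm (hφmem m)
  have h2 : φ n ∈ (Chain (k + 1)).1 := hanti n (k + 1) hn (hφmem n)
  exact lt_of_le_of_lt (hChainMaz k _ h1 _ h2) (hk k le_rfl)

end KeyLemma
/-! ### Statement 15 -/

theorem statement15 {X : Type*} [MetricSpace X] [ProperSpace X]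
    [LocallyConnectedSpace X] [MeasurableSpace X] [BorelSpace X]
    (μ : Measure X) (hμc : μ.IsComplete) (hball : BallRegular μ)
    (p : ℝ) (hp : 1 ≤ p)
    (Ω : Set X) (hΩ : IsBoundedDomain Ω) (hfc : FinConnAtBoundary Ω)
    (Z : Type*) [MetricSpace Z] [CompleteSpace Z] [MeasurableSpace Z] [BorelSpace Z]
    (ι : Ω → Z) (hι : ∀ x y : Ω, edist (ι x) (ι y) = mazDist Ω (x : X) (y : X))
    (hdense : DenseRange ι) (ν : Measure Z)
    (hν : ∀ A : Set Z, MeasurableSet A → ν A = μ (Subtype.val '' (ι ⁻¹' A)))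
    (Φ : Z → X) (hΦ : LipschitzWith 1 Φ) (hΦι : ∀ x : Ω, Φ (ι x) = (x : X))
    (E : Set X) (hE : E ⊆ closure Ω) :
    bCpOn ν p (Set.range ι) (Φ ⁻¹' E) = bCpOn μ p Ω E := by
  classical
  obtain ⟨hΩo, hΩconn, hΩbd⟩ := hΩ
  have hΩne : Ω.Nonempty := hΩconn.nonempty
  have hΩmeas : MeasurableSet Ω := hΩo.measurableSet
  have hΦmeas : Measurable Φ := hΦ.continuous.measurable
  have hΦrange : ∀ z ∈ Set.range ι, Φ z ∈ Ω := by
    rintro _ ⟨x, rfl⟩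
    rw [hΦι]
    exact x.2
  have hedistmaz : ∀ z ∈ Set.range ι, ∀ w ∈ Set.range ι,
      edist z w = mazDist Ω (Φ z) (Φ w) := by
    rintro _ ⟨a, rfl⟩ _ ⟨b, rfl⟩
    rw [hΦι, hΦι, hι]
  -- continuity of ι
  have hιcont : Continuous ι := by
    rw [Metric.continuous_iff]
    rintro ⟨x, hx⟩ ε hε
    have hU : Ω ∩ Metric.ball x (ε / 3) ∈ 𝓝 x :=
      Filter.inter_mem (hΩo.mem_nhds hx) (Metric.ball_mem_nhds x (by linarith))
    obtain ⟨V, hVU, hVo, hxV, hVconn⟩ :=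
      (locallyConnectedSpace_iff_subsets_isOpen_isConnected.mp ‹_›) x _ hU
    obtain ⟨δ, hδ, hδV⟩ := Metric.isOpen_iff.mp hVo x hxV
    refine ⟨δ, hδ, ?_⟩
    rintro ⟨y, hy⟩ hdist
    have hyV : y ∈ V := hδV (by simpa [Subtype.dist_eq] using hdist)
    have hmaz : mazDist Ω y x ≤ EMetric.diam V :=
      mazDist_le_diam (hVU.trans Set.inter_subset_left) hVconn hyV hxV
    have hdiam : EMetric.diam V ≤ ENNReal.ofReal (2 * (ε / 3)) := by
      refine EMetric.diam_le fun z hz w hw => ?_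
      have hz' := Metric.mem_ball.mp (hVU hz).2
      have hw' := Metric.mem_ball.mp (hVU hw).2
      calc edist z w ≤ edist z x + edist x w := edist_triangle _ _ _
        _ ≤ ENNReal.ofReal (ε / 3) + ENNReal.ofReal (ε / 3) := by
            gcongr
            · rw [edist_dist]
              exact ENNReal.ofReal_le_ofReal hz'.le
            · rw [edist_comm, edist_dist]
              exact ENNReal.ofReal_le_ofReal hw'.le
        _ = ENNReal.ofReal (2 * (ε / 3)) := by
            rw [← ENNReal.ofReal_add (by linarith) (by linarith)]; ring_nf
    have : edist (ι ⟨y, hy⟩) (ι ⟨x, hx⟩) ≤ ENNReal.ofReal (2 * (ε / 3)) := by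
      rw [hι]
      exact hmaz.trans hdiam
    have hd : dist (ι ⟨y, hy⟩) (ι ⟨x, hx⟩) ≤ 2 * (ε / 3) := by
      rw [dist_edist]
      exact ENNReal.toReal_le_of_le_ofReal (by linarith) this
    linarith
  have hιmeas : Measurable ι := hιcont.measurable
  -- measurability of the range of ι
  have hrange_meas : MeasurableSet (Set.range ι) := by
    obtain ⟨x₀, hx₀⟩ := hΩne
    set C : ℕ → Set X := fun n =>
      (Metric.closedBall x₀ (n + 1)) \ Metric.thickening (1 / (n + 1)) Ωᶜ with hC
    have hCcpt : ∀ n, IsCompact (C n) := by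
      intro n
      refine Metric.isCompact_of_isClosed_isBounded
        (Metric.isClosed_closedBall.sdiff Metric.isOpen_thickening) ?_
      exact (Metric.isBounded_closedBall).subset Set.diff_subset
    have hCΩ : ∀ n, C n ⊆ Ω := by
      intro n z hz
      by_contra hzn
      exact hz.2 (Metric.self_subset_thickening (by positivity) Ωᶜ hzn)
    have hCcover : ∀ z ∈ Ω, ∃ n, z ∈ C n := by
      intro z hz
      obtain ⟨r, hr, hball'⟩ := Metric.isOpen_iff.mp hΩo z hz
      obtain ⟨n₁, hn₁⟩ := exists_nat_one_div_lt hr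
      obtain ⟨n₂, hn₂⟩ := exists_nat_ge (dist z x₀)
      refine ⟨max n₁ n₂, ⟨?_, ?_⟩⟩
      · rw [Metric.mem_closedBall]
        calc dist z x₀ ≤ (n₂ : ℝ) := hn₂
          _ ≤ (max n₁ n₂ : ℕ) + 1 := by
              have : (n₂ : ℝ) ≤ ((max n₁ n₂ : ℕ) : ℝ) := by
                exact_mod_cast Nat.le_max_right n₁ n₂
              linarith
      · intro hzt
        rw [Metric.mem_thickening_iff] at hzt
        obtain ⟨w, hw, hdw⟩ := hzt
        refine hw (hball' ?_)
        rw [Metric.mem_ball, dist_comm]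
        have h2 : ((n₁ : ℕ) : ℝ) ≤ ((max n₁ n₂ : ℕ) : ℝ) := by
          exact_mod_cast Nat.le_max_left n₁ n₂
        have hle : 1 / ((max n₁ n₂ : ℕ) + 1 : ℝ) ≤ 1 / ((n₁ : ℝ) + 1) := by
          apply one_div_le_one_div_of_le (by positivity)
          linarith
        exact lt_trans hdw (lt_of_le_of_lt hle hn₁)
    have hrange_eq : Set.range ι = ⋃ n, ι '' (Subtype.val ⁻¹' C n) := by
      ext z
      constructor
      · rintro ⟨a, rfl⟩
        obtain ⟨n, hn⟩ := hCcover a a.2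
        exact Set.mem_iUnion.mpr ⟨n, Set.mem_image_of_mem _ hn⟩
      · rintro h
        obtain ⟨n, a, _, rfl⟩ := Set.mem_iUnion.mp h
        exact ⟨a, rfl⟩
    rw [hrange_eq]
    refine MeasurableSet.iUnion fun n => ?_
    have hsubcpt : IsCompact ((Subtype.val : Ω → X) ⁻¹' C n) := by
      rw [Topology.IsEmbedding.subtypeVal.isCompact_iff]
      have : (Subtype.val : Ω → X) '' (Subtype.val ⁻¹' C n) = C n := by
        rw [Set.image_preimage_eq_inter_range, Subtype.range_coe]
        exact Set.inter_eq_self_of_subset_left (hCΩ n)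
      rw [this]
      exact hCcpt n
    exact ((hsubcpt.image hιcont).isClosed).measurableSet
    -- the measure ν is the image of μ on Ω under ι
  set m : Measure Ω := μ.comap Subtype.val with hm
  have hemb : MeasurableEmbedding (Subtype.val : Ω → X) :=
    MeasurableEmbedding.subtype_coe hΩmeas
  have hνeq : ν = Measure.map ι m := by
    refine Measure.ext fun A hA => ?_
    rw [Measure.map_apply hιmeas hA, hm, hemb.comap_apply, hν A hA]
  have hINT : ∀ F : Z → ℝ≥0∞, Measurable F → ∀ H : X → ℝ≥0∞,
      (∀ x : Ω, H (x : X) = F (ι x)) →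
      ∫⁻ z in Set.range ι, F z ∂ν = ∫⁻ x in Ω, H x ∂μ := by
    intro F hF H hFH
    have hae : ∀ᵐ z ∂ν, z ∈ Set.range ι := by
      rw [Filter.eventually_iff, mem_ae_iff]
      have : {z : Z | z ∈ Set.range ι}ᶜ = (Set.range ι)ᶜ := rfl
      rw [this, hν _ hrange_meas.compl]
      simp
    calc ∫⁻ z in Set.range ι, F z ∂ν = ∫⁻ z, F z ∂ν := by
          rw [Measure.restrict_eq_self_of_ae_mem hae]
      _ = ∫⁻ x, F (ι x) ∂m := by rw [hνeq, lintegral_map hF hιmeas]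
      _ = ∫⁻ x, H (x : X) ∂m := lintegral_congr fun x => (hFH x).symm
      _ = ∫⁻ x, H x ∂(Measure.map Subtype.val m) := (hemb.lintegral_map H).symm
      _ = ∫⁻ x in Ω, H x ∂μ := by rw [hm, hemb.map_comap, Subtype.range_coe]
  obtain ⟨x₀, hx₀⟩ := hΩne
  -- arc length transfer for curves in the range of ι
  have harcA : ∀ (γ : ℝ → Z) (L : ℝ), Set.MapsTo γ (Set.Icc 0 L) (Set.range ι) →
      IsArcLengthParamWith (fun a b => edist a b) γ L →
      IsArcLengthParamWith (fun a b => edist a b) (fun t => Φ (γ t)) L := by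
    intro γ L hmaps harc s t hs ht hst
    have hIccsub : Set.Icc s t ⊆ Set.Icc 0 L := Set.Icc_subset_Icc hs.1 ht.2
    have hγlip : LipschitzOnWith 1 γ (Set.Icc 0 L) := harc.lipschitzOnWith
    set η : ℝ → X := fun a => Φ (γ a) with hη
    have hηmaps : Set.MapsTo η (Set.Icc s t) Ω := fun a ha => hΦrange _ (hmaps (hIccsub ha))
    have hηcont : ContinuousOn η (Set.Icc s t) :=
      hΦ.continuous.comp_continuousOn (hγlip.continuousOn.mono hIccsub)
    have e1 : variationWith (mazDist Ω) η s t = variationWith (fun a b => edist a b) γ s t :=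
      variationWith_congr _ _ _ _ fun a ha b hb =>
        (hedistmaz _ (hmaps (hIccsub ha)) _ (hmaps (hIccsub hb))).symm
    have e2 := variationWith_mazDist_eq Ω η hst hηcont hηmaps
    show variationWith (fun a b => edist a b) η s t = ENNReal.ofReal (t - s)
    rw [← e2, e1]
    exact harc s t hs ht hst
  -- upper gradient transfer, direction A
  have hUGA : ∀ (u : X → ℝ) (g : X → ℝ≥0∞),
      IsUpperGradientWith (fun a b => edist a b) Ω g (fun y => (u y : EReal)) →
      IsUpperGradientWith (fun a b => edist a b) (Set.range ι) (fun z => g (Φ z))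
        (fun z => ((u (Φ z) : ℝ) : EReal)) := by
    intro u g hg γ L hL hmaps harc
    exact hg (fun t => Φ (γ t)) L hL (fun a ha => hΦrange _ (hmaps ha)) (harcA γ L hmaps harc)
  -- upper gradient transfer, direction B
  have hUGB : ∀ (u' : Z → ℝ) (g' : Z → ℝ≥0∞),
      IsUpperGradientWith (fun a b => edist a b) (Set.range ι) g' (fun z => (u' z : EReal)) →
      IsUpperGradientWith (fun a b => edist a b) Ω
        (fun x => if h : x ∈ Ω then g' (ι ⟨x, h⟩) else 0)
        (fun x => ((if h : x ∈ Ω then u' (ι ⟨x, h⟩) else 0 : ℝ) : EReal)) := by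
    intro u' g' hg' η L hL hmaps harc
    have hηlip : LipschitzOnWith 1 η (Set.Icc 0 L) := harc.lipschitzOnWith
    set γ : ℝ → Z := fun t => if h : η t ∈ Ω then ι ⟨η t, h⟩ else ι ⟨x₀, hx₀⟩ with hγdef
    have hγval : ∀ t, ∀ ht : t ∈ Set.Icc (0:ℝ) L, γ t = ι ⟨η t, hmaps ht⟩ :=
      fun t ht => dif_pos (hmaps ht)
    have hγmaps : Set.MapsTo γ (Set.Icc 0 L) (Set.range ι) := by
      intro t ht
      rw [hγval t ht]
      exact Set.mem_range_self _
    have hγarc : IsArcLengthParamWith (fun a b => edist a b) γ L := by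
      intro s t hs ht hst
      have hIccsub : Set.Icc s t ⊆ Set.Icc 0 L := Set.Icc_subset_Icc hs.1 ht.2
      have e1 : variationWith (fun a b => edist a b) γ s t
          = variationWith (mazDist Ω) η s t := by
        refine variationWith_congr _ _ _ _ fun a ha b hb => ?_
        have ha' := hIccsub ha
        have hb' := hIccsub hb
        rw [hγval a ha', hγval b hb', hι]
      have e2 := variationWith_mazDist_eq Ω η hst (hηlip.continuousOn.mono hIccsub)
        (hmaps.mono_left hIccsub)
      rw [e1, e2]
      exact harc s t hs ht hst
    have key : erealAbs ((u' (γ L) : EReal) - (u' (γ 0) : EReal))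
        ≤ ∫⁻ t in Set.Icc 0 L, g' (γ t) := hg' γ L hL hγmaps hγarc
    have h0m : (0 : ℝ) ∈ Set.Icc (0 : ℝ) L := ⟨le_rfl, hL.le⟩
    have hLm : L ∈ Set.Icc (0 : ℝ) L := ⟨hL.le, le_rfl⟩
    have hval : ∀ t ∈ Set.Icc (0 : ℝ) L,
        u' (γ t) = (if h : η t ∈ Ω then u' (ι ⟨η t, h⟩) else 0) := by
      intro t ht
      simp only [hγval t ht, dif_pos (hmaps ht)]
    have hIeq : ∫⁻ t in Set.Icc (0 : ℝ) L, g' (γ t)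
        = ∫⁻ t in Set.Icc (0 : ℝ) L, (if h : η t ∈ Ω then g' (ι ⟨η t, h⟩) else 0) := by
      refine lintegral_congr_ae ((ae_restrict_iff' measurableSet_Icc).2
        (Filter.Eventually.of_forall fun t ht => ?_))
      simp only [hγval t ht, dif_pos (hmaps ht)]
    refine le_trans (le_of_eq ?_) (key.trans (le_of_eq hIeq))
    simp only [hval L hLm, hval 0 h0m]
  -- energy comparison, direction A
  have energyA : ∀ u : X → ℝ, Measurable u →
      npEnergyOn ν p (Set.range ι) (fun z => u (Φ z)) ≤ npEnergyOn μ p Ω u := by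
    intro u hu
    unfold npEnergyOn npEnergyWith
    have hfirst : ∫⁻ z in Set.range ι, ENNReal.ofReal |u (Φ z)| ^ p ∂ν
        = ∫⁻ x in Ω, ENNReal.ofReal |u x| ^ p ∂μ := by
      refine hINT (fun z => ENNReal.ofReal |u (Φ z)| ^ p) ?_
        (fun x => ENNReal.ofReal |u x| ^ p) fun x => ?_
      · exact (ENNReal.measurable_ofReal.comp (hu.comp hΦmeas).abs).pow measurable_const
      · simp only [hΦι]
    rw [hfirst]
    refine add_le_add_right ?_ _
    refine le_iInf₂ fun g hg => ?_
    refine iInf₂_le_of_le (fun z => g (Φ z)) ⟨hg.1.comp hΦmeas, hUGA u g hg.2⟩ ?_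
    refine le_of_eq (hINT (fun z => g (Φ z) ^ p) ?_ (fun x => g x ^ p) fun x => ?_)
    · exact (hg.1.comp hΦmeas).pow measurable_const
    · simp only [hΦι]
  -- energy comparison, direction B
  have energyB : ∀ u' : Z → ℝ, Measurable u' →
      npEnergyOn μ p Ω (fun x => if h : x ∈ Ω then u' (ι ⟨x, h⟩) else 0)
        ≤ npEnergyOn ν p (Set.range ι) u' := by
    intro u' hu'
    unfold npEnergyOn npEnergyWith
    have hfirst : ∫⁻ z in Set.range ι, ENNReal.ofReal |u' z| ^ p ∂ν
        = ∫⁻ x in Ω, ENNReal.ofReal |(if h : x ∈ Ω then u' (ι ⟨x, h⟩) else 0)| ^ p ∂μ := by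
      refine hINT (fun z => ENNReal.ofReal |u' z| ^ p) ?_
        (fun x => ENNReal.ofReal |(if h : x ∈ Ω then u' (ι ⟨x, h⟩) else 0)| ^ p) fun x => ?_
      · exact (ENNReal.measurable_ofReal.comp hu'.abs).pow measurable_const
      · simp only [dif_pos x.2, Subtype.coe_eta]
    rw [← hfirst]
    refine add_le_add_right ?_ _
    refine le_iInf₂ fun g' hg' => ?_
    refine iInf₂_le_of_le (fun x => if h : x ∈ Ω then g' (ι ⟨x, h⟩) else 0)
      ⟨Measurable.dite (hg'.1.comp hιmeas) measurable_const hΩmeas, hUGB u' g' hg'.2⟩ ?_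
    refine le_of_eq (hINT (fun z => g' z ^ p) (hg'.1.pow measurable_const)
      (fun x => (if h : x ∈ Ω then g' (ι ⟨x, h⟩) else 0) ^ p) fun x => ?_).symm
    simp only [dif_pos x.2, Subtype.coe_eta]
  -- final comparison of the two capacities
  apply le_antisymm
  · -- bCp w.r.t. the Mazurkiewicz completion is at most bCp(E;Ω)
    refine le_iInf₂ fun u hu => ?_
    obtain ⟨⟨humeas, hufin⟩, hu1, hu2⟩ := hu
    refine le_trans (iInf₂_le (fun z => u (Φ z)) ?_) (energyA u humeas)
    refine ⟨⟨humeas.comp hΦmeas, fun h => hufin (top_unique (h ▸ energyA u humeas))⟩, ?_, ?_⟩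
    · rintro z ⟨hzE, hzr⟩
      exact hu1 (Φ z) ⟨hzE, hΦrange z hzr⟩
    · rintro z ⟨hzE, hzcl, hznr⟩
      have hΦim : Φ '' Set.range ι ⊆ Ω := by
        rintro _ ⟨w, hw, rfl⟩
        exact hΦrange w hw
      have hΦcl : Φ z ∈ closure Ω := by
        refine closure_mono hΦim ?_
        exact image_closure_subset_closure_image hΦ.continuous
          (Set.mem_image_of_mem Φ (hdense z))
      have hΦnot : Φ z ∉ Ω := by
        intro hw
        obtain ⟨w, hwseq, hwlim⟩ := mem_closure_iff_seq_limit.mp (hdense z)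
        choose a ha using hwseq
        have hval : Filter.Tendsto (fun n => ((a n : Ω) : X)) Filter.atTop (𝓝 (Φ z)) := by
          have h1 : Filter.Tendsto (fun n => Φ (w n)) Filter.atTop (𝓝 (Φ z)) :=
            (hΦ.continuous.tendsto z).comp hwlim
          refine h1.congr fun n => ?_
          rw [← ha n, hΦι]
        have hsub : Filter.Tendsto a Filter.atTop (𝓝 (⟨Φ z, hw⟩ : Ω)) := by
          rw [Topology.IsEmbedding.subtypeVal.tendsto_nhds_iff]
          exact hval
        have h2 : Filter.Tendsto w Filter.atTop (𝓝 (ι ⟨Φ z, hw⟩)) :=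
          ((hιcont.tendsto _).comp hsub).congr fun n => ha n
        exact hznr ⟨_, (tendsto_nhds_unique hwlim h2).symm⟩
      have hblow := hu2 (Φ z) ⟨hzE, hΦcl, hΦnot⟩
      have hmapfil : Filter.Tendsto Φ (nhdsWithin z (Set.range ι)) (nhdsWithin (Φ z) Ω) := by
        refine tendsto_nhdsWithin_of_tendsto_nhds_of_eventually_within _
          ((hΦ.continuous.tendsto z).mono_left nhdsWithin_le_nhds) ?_
        exact Filter.eventually_of_mem self_mem_nhdsWithin fun y hy => hΦrange y hy
      calc (1 : EReal) ≤ Filter.liminf (fun y => ((u y : ℝ) : EReal)) (nhdsWithin (Φ z) Ω) :=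
            hblow
        _ ≤ Filter.liminf (fun y => ((u y : ℝ) : EReal))
              (Filter.map Φ (nhdsWithin z (Set.range ι))) :=
            Filter.liminf_le_liminf_of_le hmapfil
        _ = Filter.liminf (fun y => ((u (Φ y) : ℝ) : EReal)) (nhdsWithin z (Set.range ι)) := by
            unfold Filter.liminf
            rw [Filter.map_map]
            rfl
  · -- bCp(E;Ω) is at most bCp w.r.t. the Mazurkiewicz completion
    refine le_iInf₂ fun u' hu' => ?_
    obtain ⟨⟨humeas', hufin'⟩, hu1', hu2'⟩ := hu'
    refine le_trans (iInf₂_le (fun x => if h : x ∈ Ω then u' (ι ⟨x, h⟩) else 0) ?_)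
      (energyB u' humeas')
    refine ⟨⟨Measurable.dite (humeas'.comp hιmeas) measurable_const hΩmeas,
      fun h => hufin' (top_unique (h ▸ energyB u' humeas'))⟩, ?_, ?_⟩
    · rintro x ⟨hxE, hxΩ⟩
      have hmem : ι ⟨x, hxΩ⟩ ∈ (Φ ⁻¹' E) ∩ Set.range ι := by
        refine ⟨?_, Set.mem_range_self _⟩
        rw [Set.mem_preimage, hΦι]
        exact hxE
      have h1 := hu1' (ι ⟨x, hxΩ⟩) hmem
      simp only [dif_pos hxΩ]
      exact h1
    · rintro x ⟨hxE, hxcl, hxnΩ⟩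
      rw [Filter.le_liminf_iff]
      intro c hc
      by_contra hev
      rw [Filter.not_eventually] at hev
      have hfreq : ∃ᶠ y in nhdsWithin x Ω,
          ((if h : y ∈ Ω then u' (ι ⟨y, h⟩) else 0 : ℝ) : EReal) ≤ c :=
        hev.mono fun y hy => not_lt.mp hy
      have hseq : ∀ n : ℕ, ∃ y, y ∈ Ω ∧ dist y x < 1 / (n + 1) ∧
          ((if h : y ∈ Ω then u' (ι ⟨y, h⟩) else 0 : ℝ) : EReal) ≤ c := by
        intro n
        have hU : Metric.ball x (1 / (n + 1)) ∩ Ω ∈ nhdsWithin x Ω :=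
          Filter.inter_mem
            (mem_nhdsWithin_of_mem_nhds (Metric.ball_mem_nhds x (by positivity)))
            self_mem_nhdsWithin
        obtain ⟨y, hyU, hyle⟩ := Filter.frequently_iff.mp hfreq hU
        exact ⟨y, hyU.2, by simpa [Metric.mem_ball] using hyU.1, hyle⟩
      choose y hyΩ hydist hyle using hseq
      have hconv : Filter.Tendsto y Filter.atTop (𝓝 x) := by
        rw [tendsto_iff_dist_tendsto_zero]
        refine squeeze_zero (fun n => dist_nonneg) (fun n => (hydist n).le) ?_
        exact tendsto_one_div_add_atTop_nhds_zero_nat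
      obtain ⟨φ, hφmono, hφcauchy⟩ := exists_subseq_mazCauchy hΩo hfc hxcl hxnΩ y hyΩ hconv
      set w : ℕ → Z := fun n => ι ⟨y (φ n), hyΩ (φ n)⟩ with hw
      have hwC : CauchySeq w := by
        rw [EMetric.cauchySeq_iff]
        intro ε hε
        obtain ⟨N, hN⟩ := hφcauchy ε hε
        refine ⟨N, fun a ha b hb => ?_⟩
        rw [hw]
        simp only []
        rw [hι]
        exact hN a ha b hb
      obtain ⟨z, hz⟩ := cauchySeq_tendsto_of_complete hwC
      have hΦz : Φ z = x := by
        have h1 : Filter.Tendsto (fun n => Φ (w n)) Filter.atTop (𝓝 (Φ z)) :=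
          (hΦ.continuous.tendsto z).comp hz
        have h2 : Filter.Tendsto (fun n => Φ (w n)) Filter.atTop (𝓝 x) := by
          refine (hconv.comp hφmono.tendsto_atTop).congr fun n => ?_
          simp only [hw, Function.comp, hΦι]
        exact tendsto_nhds_unique h1 h2
      have hznr : z ∉ Set.range ι := by
        rintro ⟨a, rfl⟩
        rw [hΦι] at hΦz
        exact hxnΩ (hΦz ▸ a.2)
      have hblow := hu2' z ⟨by rwa [Set.mem_preimage, hΦz], hdense z, hznr⟩
      have hwl : Filter.Tendsto w Filter.atTop (nhdsWithin z (Set.range ι)) :=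
        tendsto_nhdsWithin_of_tendsto_nhds_of_eventually_within _ hz
          (Filter.Eventually.of_forall fun n => Set.mem_range_self _)
      have hle2 : Filter.liminf (fun y' => ((u' y' : ℝ) : EReal)) (nhdsWithin z (Set.range ι))
          ≤ Filter.liminf (fun n => ((u' (w n) : ℝ) : EReal)) Filter.atTop := by
        calc Filter.liminf (fun y' => ((u' y' : ℝ) : EReal)) (nhdsWithin z (Set.range ι))
            ≤ Filter.liminf (fun y' => ((u' y' : ℝ) : EReal))
                (Filter.map w Filter.atTop) := Filter.liminf_le_liminf_of_le hwl
          _ = _ := by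
              unfold Filter.liminf
              rw [Filter.map_map]
              rfl
      have hub : Filter.liminf (fun n => ((u' (w n) : ℝ) : EReal)) Filter.atTop ≤ c := by
        refine Filter.liminf_le_of_frequently_le' (Filter.Frequently.of_forall fun n => ?_)
        have hh := hyle (φ n)
        rwa [dif_pos (hyΩ (φ n))] at hh
      exact absurd (hblow.trans (hle2.trans hub)) (not_le.mpr hc)

end
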